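/- Let A = [[S, T̄],[T, S̄]] be a symplectic matrix, i.e., satisfying A J A* = A* J A = J. Then the algebraic relations S*S − T*T = 1, S̄*T − T̄*S = 0, S S* − (T T*)‾ = 1, and T S* − (S T*)‾ = 0 hold, the operator S is invertible with bounded inverse, ‖TS^{-1}‖ < 1, and TS^{-1} is symmetric in the sense (TS^{-1})^T = TS^{-1} where X^T = C X* C for a conjugation C. -/

import Mathlib

noncomputable section

open ContinuousLinearMap
open scoped InnerProductSpace

variable {𝓗 : Type*} [NormedAddCommGroup 𝓗] [InnerProductSpace ℂ 𝓗] [CompleteSpace 𝓗]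

/-- The block operator `[[S, Tb],[T, Sb]]` on the Hilbert space direct sum `𝓗 ⊕ 𝓗`
(realized as `WithLp 2 (𝓗 × 𝓗)`). -/
def blockOp (S Tb T Sb : 𝓗 →L[ℂ] 𝓗) : WithLp 2 (𝓗 × 𝓗) →L[ℂ] WithLp 2 (𝓗 × 𝓗) :=
  ((WithLp.prodContinuousLinearEquiv (p := 2) (𝕜 := ℂ) (α := 𝓗) (β := 𝓗)).symm :
      (𝓗 × 𝓗) →L[ℂ] WithLp 2 (𝓗 × 𝓗)) ∘L
    (((S ∘L ContinuousLinearMap.fst ℂ 𝓗 𝓗) + (Tb ∘L ContinuousLinearMap.snd ℂ 𝓗 𝓗)).prod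
      ((T ∘L ContinuousLinearMap.fst ℂ 𝓗 𝓗) + (Sb ∘L ContinuousLinearMap.snd ℂ 𝓗 𝓗))) ∘L
    ((WithLp.prodContinuousLinearEquiv (p := 2) (𝕜 := ℂ) (α := 𝓗) (β := 𝓗)) :
      WithLp 2 (𝓗 × 𝓗) →L[ℂ] (𝓗 × 𝓗))

omit [CompleteSpace 𝓗] in
lemma blockOp_apply' (S Tb T Sb : 𝓗 →L[ℂ] 𝓗) (x : WithLp 2 (𝓗 × 𝓗)) :
    blockOp S Tb T Sb x =
      (WithLp.equiv 2 (𝓗 × 𝓗)).symm (S (WithLp.equiv 2 _ x).1 + Tb (WithLp.equiv 2 _ x).2,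
        T (WithLp.equiv 2 _ x).1 + Sb (WithLp.equiv 2 _ x).2) := rfl

omit [CompleteSpace 𝓗] in
lemma blockOp_comp' (S Tb T Sb S' Tb' T' Sb' : 𝓗 →L[ℂ] 𝓗) :
    blockOp S Tb T Sb ∘L blockOp S' Tb' T' Sb' =
      blockOp (S ∘L S' + Tb ∘L T') (S ∘L Tb' + Tb ∘L Sb')
        (T ∘L S' + Sb ∘L T') (T ∘L Tb' + Sb ∘L Sb') := by
  ext x : 1
  simp [blockOp_apply', Prod.ext_iff]
  constructor <;> abel

lemma blockOp_adjoint' (S Tb T Sb : 𝓗 →L[ℂ] 𝓗) :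
    ContinuousLinearMap.adjoint (blockOp S Tb T Sb) =
      blockOp (ContinuousLinearMap.adjoint S) (ContinuousLinearMap.adjoint T)
        (ContinuousLinearMap.adjoint Tb) (ContinuousLinearMap.adjoint Sb) := by
  symm
  apply ContinuousLinearMap.eq_adjoint_iff _ _ |>.2
  intro x y
  simp [blockOp_apply', WithLp.prod_inner_apply, inner_add_left, inner_add_right,
    ContinuousLinearMap.adjoint_inner_left]
  ring

omit [CompleteSpace 𝓗] in
lemma blockOp_inj' {A B Cc D A' B' C' D' : 𝓗 →L[ℂ] 𝓗}
    (h : blockOp A B Cc D = blockOp A' B' C' D') :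
    A = A' ∧ B = B' ∧ Cc = C' ∧ D = D' := by
  refine ⟨?_, ?_, ?_, ?_⟩ <;> ext v
  · have := congrArg (fun f : WithLp 2 (𝓗 × 𝓗) →L[ℂ] WithLp 2 (𝓗 × 𝓗) =>
      ((WithLp.equiv 2 (𝓗 × 𝓗)) (f ((WithLp.equiv 2 (𝓗 × 𝓗)).symm (v, 0)))).1) h
    simpa [blockOp_apply'] using this
  · have := congrArg (fun f : WithLp 2 (𝓗 × 𝓗) →L[ℂ] WithLp 2 (𝓗 × 𝓗) =>
      ((WithLp.equiv 2 (𝓗 × 𝓗)) (f ((WithLp.equiv 2 (𝓗 × 𝓗)).symm (0, v)))).1) h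
    simpa [blockOp_apply'] using this
  · have := congrArg (fun f : WithLp 2 (𝓗 × 𝓗) →L[ℂ] WithLp 2 (𝓗 × 𝓗) =>
      ((WithLp.equiv 2 (𝓗 × 𝓗)) (f ((WithLp.equiv 2 (𝓗 × 𝓗)).symm (v, 0)))).2) h
    simpa [blockOp_apply'] using this
  · have := congrArg (fun f : WithLp 2 (𝓗 × 𝓗) →L[ℂ] WithLp 2 (𝓗 × 𝓗) =>
      ((WithLp.equiv 2 (𝓗 × 𝓗)) (f ((WithLp.equiv 2 (𝓗 × 𝓗)).symm (0, v)))).2) h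
    simpa [blockOp_apply'] using this

omit [CompleteSpace 𝓗] in
lemma inner_conj_conj' (conj : 𝓗 → 𝓗)
    (hconj_add : ∀ x y, conj (x + y) = conj x + conj y)
    (hconj_smul : ∀ (c : ℂ) x, conj (c • x) = (starRingEnd ℂ) c • conj x)
    (hconj_norm : ∀ x, ‖conj x‖ = ‖x‖) (x y : 𝓗) :
    ⟪conj x, conj y⟫_ℂ = ⟪y, x⟫_ℂ := by
  have hsub : ∀ a b, conj (a - b) = conj a - conj b := by
    intro a b
    have hneg : conj (-b) = - conj b := by simpa using hconj_smul (-1) b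
    rw [sub_eq_add_neg, hconj_add, hneg, sub_eq_add_neg]
  have hI : ∀ z, conj (Complex.I • z) = -(Complex.I • conj z) := by
    intro z; rw [hconj_smul]; simp
  have normI : ∀ z : 𝓗, ‖Complex.I • z‖ = ‖z‖ := by
    intro z; rw [norm_smul]; simp
  have h1 : ‖conj x + conj y‖ = ‖y + x‖ := by
    rw [← hconj_add, hconj_norm, add_comm]
  have h2 : ‖conj x - conj y‖ = ‖y - x‖ := by
    rw [← hsub, hconj_norm, norm_sub_rev]
  have h3 : ‖conj x - Complex.I • conj y‖ = ‖y - Complex.I • x‖ := by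
    have e1 : conj x - Complex.I • conj y = conj (x + Complex.I • y) := by
      rw [hconj_add, hI, sub_eq_add_neg]
    have e2 : ‖y - Complex.I • x‖ = ‖x + Complex.I • y‖ := by
      rw [← normI (y - Complex.I • x)]
      have : Complex.I • (y - Complex.I • x) = x + Complex.I • y := by
        rw [smul_sub, smul_smul, Complex.I_mul_I]; simp [add_comm]
      rw [this]
    rw [e1, hconj_norm, e2]
  have h4 : ‖conj x + Complex.I • conj y‖ = ‖y + Complex.I • x‖ := by
    have e1 : conj x + Complex.I • conj y = conj (x - Complex.I • y) := by
      rw [hsub, hI, sub_neg_eq_add]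
    have e2 : ‖y + Complex.I • x‖ = ‖x - Complex.I • y‖ := by
      rw [← normI (y + Complex.I • x)]
      have : Complex.I • (y + Complex.I • x) = -(x - Complex.I • y) := by
        rw [smul_add, smul_smul, Complex.I_mul_I]; simp [sub_eq_add_neg, add_comm]
      rw [this, norm_neg]
    rw [e1, hconj_norm, e2]
  rw [inner_eq_sum_norm_sq_div_four (𝕜 := ℂ), inner_eq_sum_norm_sq_div_four (𝕜 := ℂ)]
  norm_num [h1, h2, h3, h4]

set_option maxHeartbeats 2000000 in
/-- Let `A = [[S, T̄],[T, S̄]]` be symplectic, i.e. `A J A* = A* J A = J`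
with `J = diag(1, -1)`.  Then `S*S - T*T = 1`, `S̄*T - T̄*S = 0`, `SS* - (TT*)‾ = 1`,
`TS* - (ST*)‾ = 0`, the operator `S` is invertible with bounded inverse, `‖TS⁻¹‖ < 1`,
and `TS⁻¹` is symmetric in the sense `(TS⁻¹)ᵀ = TS⁻¹` where `Xᵀ = C X* C` for the
conjugation `C` (here the function `conj`). -/
theorem symplectic_algebraic_relations
    (conj : 𝓗 → 𝓗)
    (hconj_add : ∀ x y, conj (x + y) = conj x + conj y)
    (hconj_smul : ∀ (c : ℂ) x, conj (c • x) = (starRingEnd ℂ) c • conj x)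
    (hconj_inv : ∀ x, conj (conj x) = x)
    (hconj_norm : ∀ x, ‖conj x‖ = ‖x‖)
    (S T Sb Tb : 𝓗 →L[ℂ] 𝓗)
    (hSb : ∀ x, Sb x = conj (S (conj x)))    -- Sb = S̄
    (hTb : ∀ x, Tb x = conj (T (conj x)))    -- Tb = T̄
    -- the symplectic condition A J A* = A* J A = J
    (hsymp1 : blockOp S Tb T Sb ∘L blockOp 1 0 0 (-1) ∘L
        ContinuousLinearMap.adjoint (blockOp S Tb T Sb) = blockOp 1 0 0 (-1))
    (hsymp2 : ContinuousLinearMap.adjoint (blockOp S Tb T Sb) ∘L blockOp 1 0 0 (-1) ∘L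
        blockOp S Tb T Sb = blockOp 1 0 0 (-1)) :
    (ContinuousLinearMap.adjoint S ∘L S - ContinuousLinearMap.adjoint T ∘L T = 1) ∧
    (ContinuousLinearMap.adjoint Sb ∘L T - ContinuousLinearMap.adjoint Tb ∘L S = 0) ∧
    (∀ x, S (ContinuousLinearMap.adjoint S x)
        - conj (T (ContinuousLinearMap.adjoint T (conj x))) = x) ∧
    (∀ x, T (ContinuousLinearMap.adjoint S x)
        - conj (S (ContinuousLinearMap.adjoint T (conj x))) = 0) ∧
    (∃ Sinv : 𝓗 →L[ℂ] 𝓗, S ∘L Sinv = 1 ∧ Sinv ∘L S = 1 ∧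
      ‖T ∘L Sinv‖ < 1 ∧
      ∀ x, (T ∘L Sinv) x = conj (ContinuousLinearMap.adjoint (T ∘L Sinv) (conj x))) := by
  have hicc := inner_conj_conj' conj hconj_add hconj_smul hconj_norm
  -- adjoints of the conjugated operators
  have hSbadj : ∀ x, ContinuousLinearMap.adjoint Sb x = conj (ContinuousLinearMap.adjoint S (conj x)) := by
    intro x
    refine ext_inner_right ℂ fun v => ?_
    rw [ContinuousLinearMap.adjoint_inner_left]
    calc ⟪x, Sb v⟫_ℂ = ⟪conj (conj x), conj (S (conj v))⟫_ℂ := by rw [hconj_inv, hSb]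
      _ = ⟪S (conj v), conj x⟫_ℂ := hicc _ _
      _ = ⟪conj v, ContinuousLinearMap.adjoint S (conj x)⟫_ℂ := by
          rw [ContinuousLinearMap.adjoint_inner_right]
      _ = ⟪conj (ContinuousLinearMap.adjoint S (conj x)), conj (conj v)⟫_ℂ := (hicc _ _).symm
      _ = ⟪conj (ContinuousLinearMap.adjoint S (conj x)), v⟫_ℂ := by rw [hconj_inv]
  have hTbadj : ∀ x, ContinuousLinearMap.adjoint Tb x = conj (ContinuousLinearMap.adjoint T (conj x)) := by
    intro x
    refine ext_inner_right ℂ fun v => ?_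
    rw [ContinuousLinearMap.adjoint_inner_left]
    calc ⟪x, Tb v⟫_ℂ = ⟪conj (conj x), conj (T (conj v))⟫_ℂ := by rw [hconj_inv, hTb]
      _ = ⟪T (conj v), conj x⟫_ℂ := hicc _ _
      _ = ⟪conj v, ContinuousLinearMap.adjoint T (conj x)⟫_ℂ := by
          rw [ContinuousLinearMap.adjoint_inner_right]
      _ = ⟪conj (ContinuousLinearMap.adjoint T (conj x)), conj (conj v)⟫_ℂ := (hicc _ _).symm
      _ = ⟪conj (ContinuousLinearMap.adjoint T (conj x)), v⟫_ℂ := by rw [hconj_inv]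
  -- extract the block relations
  rw [blockOp_adjoint'] at hsymp1 hsymp2
  rw [blockOp_comp', blockOp_comp'] at hsymp1 hsymp2
  simp only [ContinuousLinearMap.one_def, ContinuousLinearMap.id_comp,
    ContinuousLinearMap.comp_id, ContinuousLinearMap.zero_comp,
    ContinuousLinearMap.comp_zero, add_zero, zero_add,
    ContinuousLinearMap.neg_comp, ContinuousLinearMap.comp_neg, neg_neg] at hsymp1 hsymp2
  obtain ⟨f1, _, f3, _⟩ := blockOp_inj' hsymp1
  obtain ⟨e1, _, e3, _⟩ := blockOp_inj' hsymp2
  -- `e1 : S† ∘L S + -(T† ∘L T) = 1`, `e3 : Tb† ∘L S + -(Sb† ∘L T) = 0`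
  -- `f1 : S ∘L S† + -(Tb ∘L Tb†) = 1`, `f3 : T ∘L S† + -(Sb ∘L Tb†) = 0`
  have rel1 : ContinuousLinearMap.adjoint S ∘L S - ContinuousLinearMap.adjoint T ∘L T = 1 := by
    rw [sub_eq_add_neg]; exact e1
  have rel2 : ContinuousLinearMap.adjoint Sb ∘L T - ContinuousLinearMap.adjoint Tb ∘L S = 0 := by
    have : -(ContinuousLinearMap.adjoint Tb ∘L S + -(ContinuousLinearMap.adjoint Sb ∘L T)) = -0 := by
      rw [e3]
    simpa [neg_add, sub_eq_add_neg, add_comm] using this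
  have rel3 : ∀ x, S (ContinuousLinearMap.adjoint S x)
      - conj (T (ContinuousLinearMap.adjoint T (conj x))) = x := by
    intro x
    have := congrArg (fun f : 𝓗 →L[ℂ] 𝓗 => f x) f1
    simp only [ContinuousLinearMap.add_apply, ContinuousLinearMap.comp_apply,
      ContinuousLinearMap.neg_apply, ContinuousLinearMap.one_apply] at this
    rw [hTb, hTbadj, hconj_inv] at this
    rw [sub_eq_add_neg]
    exact this
  have rel4 : ∀ x, T (ContinuousLinearMap.adjoint S x)
      - conj (S (ContinuousLinearMap.adjoint T (conj x))) = 0 := by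
    intro x
    have := congrArg (fun f : 𝓗 →L[ℂ] 𝓗 => f x) f3
    simp only [ContinuousLinearMap.add_apply, ContinuousLinearMap.comp_apply,
      ContinuousLinearMap.neg_apply, ContinuousLinearMap.zero_apply] at this
    rw [hSb, hTbadj, hconj_inv] at this
    rw [sub_eq_add_neg]
    exact this
  refine ⟨rel1, rel2, rel3, rel4, ?_⟩
  -- norm identity ‖S y‖² = ‖y‖² + ‖T y‖²
  have normS : ∀ y : 𝓗, ‖S y‖ ^ 2 = ‖y‖ ^ 2 + ‖T y‖ ^ 2 := by
    intro y
    have h := congrArg (fun f : 𝓗 →L[ℂ] 𝓗 => ⟪y, f y⟫_ℂ) rel1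
    simp only [ContinuousLinearMap.sub_apply, ContinuousLinearMap.comp_apply,
      ContinuousLinearMap.one_apply, inner_sub_right,
      ContinuousLinearMap.adjoint_inner_right] at h
    rw [inner_self_eq_norm_sq_to_K, inner_self_eq_norm_sq_to_K, inner_self_eq_norm_sq_to_K] at h
    have h' : ‖S y‖ ^ 2 - ‖T y‖ ^ 2 = ‖y‖ ^ 2 := by exact_mod_cast h
    linarith
  have hlow : ∀ y : 𝓗, ‖y‖ ≤ ‖S y‖ := by
    intro y
    nlinarith [normS y, norm_nonneg y, norm_nonneg (S y), sq_nonneg (‖T y‖)]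
  -- S* is bounded below
  have hlowadj : ∀ x : 𝓗, ‖x‖ ≤ ‖ContinuousLinearMap.adjoint S x‖ := by
    intro x
    have h := congrArg (fun z => ⟪x, z⟫_ℂ) (rel3 x)
    simp only [inner_sub_right] at h
    have h1 : ⟪x, S (ContinuousLinearMap.adjoint S x)⟫_ℂ
        = ⟪ContinuousLinearMap.adjoint S x, ContinuousLinearMap.adjoint S x⟫_ℂ :=
      (ContinuousLinearMap.adjoint_inner_left S (ContinuousLinearMap.adjoint S x) x).symm
    have h2 : ⟪x, conj (T (ContinuousLinearMap.adjoint T (conj x)))⟫_ℂ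
        = ⟪ContinuousLinearMap.adjoint T (conj x), ContinuousLinearMap.adjoint T (conj x)⟫_ℂ := by
      calc ⟪x, conj (T (ContinuousLinearMap.adjoint T (conj x)))⟫_ℂ
          = ⟪conj (conj x), conj (T (ContinuousLinearMap.adjoint T (conj x)))⟫_ℂ := by
            rw [hconj_inv]
        _ = ⟪T (ContinuousLinearMap.adjoint T (conj x)), conj x⟫_ℂ := hicc _ _
        _ = _ := (ContinuousLinearMap.adjoint_inner_right T
              (ContinuousLinearMap.adjoint T (conj x)) (conj x)).symm
    rw [h1, h2, inner_self_eq_norm_sq_to_K, inner_self_eq_norm_sq_to_K,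
      inner_self_eq_norm_sq_to_K] at h
    have h' : ‖ContinuousLinearMap.adjoint S x‖ ^ 2
        - ‖ContinuousLinearMap.adjoint T (conj x)‖ ^ 2 = ‖x‖ ^ 2 := by
      exact_mod_cast congrArg Complex.re h
    nlinarith [norm_nonneg x, norm_nonneg (ContinuousLinearMap.adjoint S x),
      sq_nonneg (‖ContinuousLinearMap.adjoint T (conj x)‖)]
  -- S is bijective
  have hker : S.ker = ⊥ := by
    rw [LinearMap.ker_eq_bot']
    intro m hm
    change S m = 0 at hm
    have := hlow m
    rw [hm, norm_zero] at this
    exact norm_le_zero_iff.mp this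
  have hanti : AntilipschitzWith 1 (⇑S) :=
    ContinuousLinearMap.antilipschitz_of_bound S (fun x => by simpa using hlow x)
  have hrange : LinearMap.range (S : 𝓗 →ₗ[ℂ] 𝓗) = ⊤ := by
    haveI : CompleteSpace (LinearMap.range (S : 𝓗 →ₗ[ℂ] 𝓗)) := hanti.completeSpace_range_clm
    rw [← Submodule.orthogonal_eq_bot_iff]
    rw [eq_bot_iff]
    intro x hx
    rw [Submodule.mem_orthogonal] at hx
    have hSx : ContinuousLinearMap.adjoint S x = 0 := by
      refine ext_inner_left ℂ fun v => ?_
      rw [ContinuousLinearMap.adjoint_inner_right]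
      simpa using hx (S v) (LinearMap.mem_range_self _ v)
    have := hlowadj x
    rw [hSx, norm_zero] at this
    simpa using norm_le_zero_iff.mp this
  set e := ContinuousLinearEquiv.ofBijective S hker hrange with he
  set Sinv : 𝓗 →L[ℂ] 𝓗 := (e.symm : 𝓗 →L[ℂ] 𝓗) with hSinv
  have hSSinv : ∀ x, S (Sinv x) = x := fun x =>
    ContinuousLinearEquiv.ofBijective_apply_symm_apply S hker hrange x
  have hSinvS : ∀ x, Sinv (S x) = x := fun x =>
    ContinuousLinearEquiv.ofBijective_symm_apply_apply S hker hrange x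
  have hcomp1 : S ∘L Sinv = 1 := by ext x; simpa using hSSinv x
  have hcomp2 : Sinv ∘L S = 1 := by ext x; simpa using hSinvS x
  refine ⟨Sinv, hcomp1, hcomp2, ?_, ?_⟩
  · -- ‖T ∘L Sinv‖ < 1
    set M : ℝ := max ‖S‖ 1 with hM
    have hM1 : (1:ℝ) ≤ M := le_max_right _ _
    have hMpos : (0:ℝ) < M := lt_of_lt_of_le one_pos hM1
    have hMsq : (1:ℝ) ≤ M ^ 2 := by nlinarith
    have hknn : (0:ℝ) ≤ 1 - 1 / M ^ 2 := by
      rw [sub_nonneg, div_le_one (by positivity)]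
      exact hMsq
    set k : ℝ := Real.sqrt (1 - 1 / M ^ 2) with hk
    have hk0 : 0 ≤ k := Real.sqrt_nonneg _
    have hklt : k < 1 := by
      rw [hk, Real.sqrt_lt' one_pos]
      have : 0 < 1 / M ^ 2 := by positivity
      nlinarith
    have hbound : ∀ x, ‖(T ∘L Sinv) x‖ ≤ k * ‖x‖ := by
      intro x
      have hx : ‖x‖ ≤ M * ‖Sinv x‖ := by
        calc ‖x‖ = ‖S (Sinv x)‖ := by rw [hSSinv]
          _ ≤ ‖S‖ * ‖Sinv x‖ := S.le_opNorm _
          _ ≤ M * ‖Sinv x‖ :=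
            mul_le_mul_of_nonneg_right (le_max_left _ _) (norm_nonneg _)
      have hid : ‖x‖ ^ 2 = ‖Sinv x‖ ^ 2 + ‖T (Sinv x)‖ ^ 2 := by
        have := normS (Sinv x)
        rwa [hSSinv] at this
      have hsq : ‖(T ∘L Sinv) x‖ ^ 2 ≤ (k * ‖x‖) ^ 2 := by
        have hksq : k ^ 2 = 1 - 1 / M ^ 2 := Real.sq_sqrt hknn
        have hSinvx : ‖x‖ ^ 2 / M ^ 2 ≤ ‖Sinv x‖ ^ 2 := by
          rw [div_le_iff₀ (by positivity)]
          nlinarith [norm_nonneg x, norm_nonneg (Sinv x)]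
        have : ‖T (Sinv x)‖ ^ 2 ≤ (1 - 1 / M ^ 2) * ‖x‖ ^ 2 := by
          have h1 : ‖T (Sinv x)‖ ^ 2 = ‖x‖ ^ 2 - ‖Sinv x‖ ^ 2 := by linarith
          rw [h1]
          have : (1 - 1 / M ^ 2) * ‖x‖ ^ 2 = ‖x‖ ^ 2 - ‖x‖ ^ 2 / M ^ 2 := by ring
          rw [this]
          linarith
        calc ‖(T ∘L Sinv) x‖ ^ 2 = ‖T (Sinv x)‖ ^ 2 := by rfl
          _ ≤ (1 - 1 / M ^ 2) * ‖x‖ ^ 2 := this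
          _ = (k * ‖x‖) ^ 2 := by rw [mul_pow, hksq]
      have hknx : 0 ≤ k * ‖x‖ := mul_nonneg hk0 (norm_nonneg _)
      nlinarith [norm_nonneg ((T ∘L Sinv) x)]
    calc ‖T ∘L Sinv‖ ≤ k := ContinuousLinearMap.opNorm_le_bound _ hk0 hbound
      _ < 1 := hklt
  · -- symmetry of T ∘L Sinv
    intro x
    have hadjinv : ∀ w, ContinuousLinearMap.adjoint Sinv (ContinuousLinearMap.adjoint S w) = w := by
      intro w
      have := congrArg ContinuousLinearMap.adjoint hcomp1
      rw [ContinuousLinearMap.adjoint_comp, ContinuousLinearMap.one_def,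
        ContinuousLinearMap.adjoint_id] at this
      exact congrArg (fun f : 𝓗 →L[ℂ] 𝓗 => f w) this
    have hrel2' : ∀ z, ContinuousLinearMap.adjoint S (conj (T z))
        = ContinuousLinearMap.adjoint T (conj (S z)) := by
      intro z
      have := congrArg (fun f : 𝓗 →L[ℂ] 𝓗 => f z) rel2
      simp only [ContinuousLinearMap.sub_apply, ContinuousLinearMap.comp_apply,
        ContinuousLinearMap.zero_apply, sub_eq_zero] at this
      rw [hSbadj, hTbadj] at this
      have := congrArg conj this
      rwa [hconj_inv, hconj_inv] at this
    rw [ContinuousLinearMap.adjoint_comp]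
    show T (Sinv x) = conj ((ContinuousLinearMap.adjoint Sinv)
      ((ContinuousLinearMap.adjoint T) (conj x)))
    have h1 : ContinuousLinearMap.adjoint T (conj x)
        = ContinuousLinearMap.adjoint S (conj (T (Sinv x))) := by
      rw [hrel2' (Sinv x), hSSinv]
    rw [h1, hadjinv, hconj_inv]
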